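/- arXiv:2302.00203 — 2 statements merged into one kernel-verified Lean document; each statement's English description precedes it below -/
import Mathlib

section
/- Let c_i, c_j, d be positive integers, let A_i ∈ ℝ^{c_i×d}, A_j ∈ ℝ^{c_j×d}, w_i ∈ ℝ^{c_i}, w_j ∈ ℝ^{c_j} be fixed, and for multi-channel coordinate matrices X_i ∈ ℝ^{3×c_i}, X_j ∈ ℝ^{3×c_j} define the geometric relation extractor T_R(X_i, X_j) = A_iᵀ ((w_i w_jᵀ) ⊙ D(X_i, X_j)) A_j ∈ ℝ^{d×d}, where D(X_i, X_j)(p, q) = ‖X_i(:,p) − X_j(:,q)‖₂ and ⊙ denotes the entrywise (Hadamard) product. Then T_R is E(3)-invariant: for every real orthogonal 3×3 matrix Q and every t ∈ ℝ³, T_R(Q X_i + t 1ᵀ, Q X_j + t 1ᵀ) = T_R(X_i, X_j). -/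
open Matrix BigOperators

noncomputable section

/-- Euclidean distance between the `p`-th column of `X` and the `q`-th column of `Y`. -/
def colDist {ci cj : ℕ} (X : Matrix (Fin 3) (Fin ci) ℝ) (Y : Matrix (Fin 3) (Fin cj) ℝ)
    (p : Fin ci) (q : Fin cj) : ℝ :=
  Real.sqrt (∑ r : Fin 3, (X r p - Y r q) ^ 2)

/-- Channel-wise distance matrix `D(X, Y)(p, q) = ‖X(:,p) − Y(:,q)‖₂`. -/
def Dmat {ci cj : ℕ} (X : Matrix (Fin 3) (Fin ci) ℝ) (Y : Matrix (Fin 3) (Fin cj) ℝ) :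
    Matrix (Fin ci) (Fin cj) ℝ :=
  Matrix.of fun p q => colDist X Y p q

/-- Rigid (Euclidean) action `g·X = QX + t1ᵀ`, acting columnwise by `x ↦ Qx + t`. -/
def rigid {c : ℕ} (Q : Matrix (Fin 3) (Fin 3) ℝ) (t : Fin 3 → ℝ)
    (X : Matrix (Fin 3) (Fin c) ℝ) : Matrix (Fin 3) (Fin c) ℝ :=
  Matrix.of fun r p => (∑ s : Fin 3, Q r s * X s p) + t r

/-- Geometric relation extractor `T_R(X_i, X_j) = A_iᵀ ((w_i w_jᵀ) ⊙ D(X_i, X_j)) A_j`. -/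
def TR {ci cj d : ℕ} (Ai : Matrix (Fin ci) (Fin d) ℝ) (Aj : Matrix (Fin cj) (Fin d) ℝ)
    (wi : Fin ci → ℝ) (wj : Fin cj → ℝ)
    (X : Matrix (Fin 3) (Fin ci) ℝ) (Y : Matrix (Fin 3) (Fin cj) ℝ) :
    Matrix (Fin d) (Fin d) ℝ :=
  Aiᵀ * (Matrix.of fun p q => wi p * wj q * Dmat X Y p q) * Aj


lemma orth_sum (Q : Matrix (Fin 3) (Fin 3) ℝ) (hQ : Qᵀ * Q = 1) (v : Fin 3 → ℝ) :
    ∑ r : Fin 3, (∑ s : Fin 3, Q r s * v s) ^ 2 = ∑ s : Fin 3, v s ^ 2 := by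
  have h : ∀ s s', ∑ r : Fin 3, Q r s * Q r s' = (1 : Matrix (Fin 3) (Fin 3) ℝ) s s' := by
    intro s s'
    rw [← hQ]
    simp [Matrix.mul_apply, Matrix.transpose_apply]
  calc ∑ r : Fin 3, (∑ s : Fin 3, Q r s * v s) ^ 2
      = ∑ s : Fin 3, ∑ s' : Fin 3, (∑ r : Fin 3, Q r s * Q r s') * (v s * v s') := by
        simp only [sq, Finset.sum_mul_sum, Finset.sum_mul, Finset.mul_sum]
        rw [Finset.sum_comm]
        apply Finset.sum_congr rfl; intro s _
        rw [Finset.sum_comm]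
        apply Finset.sum_congr rfl; intro s' _
        apply Finset.sum_congr rfl; intro r _
        ring
    _ = ∑ s : Fin 3, v s ^ 2 := by
        simp only [h, Matrix.one_apply]
        simp [Finset.sum_ite_eq, sq]

lemma Dmat_rigid {ci cj : ℕ} (X : Matrix (Fin 3) (Fin ci) ℝ) (Y : Matrix (Fin 3) (Fin cj) ℝ)
    (Q : Matrix (Fin 3) (Fin 3) ℝ) (hQ : Qᵀ * Q = 1) (t : Fin 3 → ℝ) :
    Dmat (rigid Q t X) (rigid Q t Y) = Dmat X Y := by
  ext p q
  simp only [Dmat, colDist, rigid, Matrix.of_apply]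
  congr 1
  have := orth_sum Q hQ (fun s => X s p - Y s q)
  rw [← this]
  apply Finset.sum_congr rfl; intro r _
  congr 1
  rw [add_sub_add_right_eq_sub, ← Finset.sum_sub_distrib]
  apply Finset.sum_congr rfl; intro s _
  ring

/-- The geometric relation extractor is E(3)-invariant. -/
theorem TR_rigid_invariant {ci cj d : ℕ} (hci : 0 < ci) (hcj : 0 < cj) (hd : 0 < d)
    (Ai : Matrix (Fin ci) (Fin d) ℝ) (Aj : Matrix (Fin cj) (Fin d) ℝ)
    (wi : Fin ci → ℝ) (wj : Fin cj → ℝ)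
    (X : Matrix (Fin 3) (Fin ci) ℝ) (Y : Matrix (Fin 3) (Fin cj) ℝ)
    (Q : Matrix (Fin 3) (Fin 3) ℝ) (hQ : Qᵀ * Q = 1) (t : Fin 3 → ℝ) :
    TR Ai Aj wi wj (rigid Q t X) (rigid Q t Y) = TR Ai Aj wi wj X Y := by
  unfold TR
  rw [Dmat_rigid X Y Q hQ t]

end
end

section
/- Let ι be a finite index set, and for each i ∈ ι let P_i, S_i ∈ ℝ^{3×k_i} be multi-channel coordinate matrices of the same shape. Define the alignment loss L_{P,S}(Q, t) = Σ_{i∈ι} ‖Q P_i + t 1ᵀ − S_i‖_F² over O(3) × ℝ³. Fix Q₁, Q₂ ∈ O(3) and t₁, t₂ ∈ ℝ³, and set P'_i = Q₂ P_i + t₂ 1ᵀ, S'_i = Q₁ S_i + t₁ 1ᵀ. Then (Q, t) is a global minimizer of L_{P,S} over O(3) × ℝ³ if and only if (Q₁ Q Q₂ᵀ, Q₁ t + t₁ − Q₁ Q Q₂ᵀ t₂) is a global minimizer of L_{P',S'} over O(3) × ℝ³. -/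
open Matrix BigOperators

noncomputable section

/-- Alignment loss `L_{P,S}(Q, t) = Σ_i ‖Q P_i + t 1ᵀ − S_i‖_F²`. -/
def alignLoss {ι : Type*} [Fintype ι] {k : ι → ℕ}
    (P S : (i : ι) → Matrix (Fin 3) (Fin (k i)) ℝ)
    (Q : Matrix (Fin 3) (Fin 3) ℝ) (t : Fin 3 → ℝ) : ℝ :=
  ∑ i, ∑ r : Fin 3, ∑ p : Fin (k i), (rigid Q t (P i) r p - S i r p) ^ 2

/-- `(Q, t)` is a global minimizer of the alignment loss `L_{P,S}` over `O(3) × ℝ³`. -/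
def IsKabschMin {ι : Type*} [Fintype ι] {k : ι → ℕ}
    (P S : (i : ι) → Matrix (Fin 3) (Fin (k i)) ℝ)
    (Q : Matrix (Fin 3) (Fin 3) ℝ) (t : Fin 3 → ℝ) : Prop :=
  Qᵀ * Q = 1 ∧ ∀ (Q' : Matrix (Fin 3) (Fin 3) ℝ) (t' : Fin 3 → ℝ), Q'ᵀ * Q' = 1 →
    alignLoss P S Q t ≤ alignLoss P S Q' t'

/-- Orthogonal matrices preserve sums of squares of vector entries. -/
lemma sum_sq_orth {Q : Matrix (Fin 3) (Fin 3) ℝ} (h : Qᵀ * Q = 1) (d : Fin 3 → ℝ) :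
    ∑ r, (∑ s, Q r s * d s) ^ 2 = ∑ s, (d s) ^ 2 := by
  have h' : ∀ s s', ∑ r, Q r s * Q r s' = (1 : Matrix (Fin 3) (Fin 3) ℝ) s s' := by
    intro s s'
    rw [← h]
    simp [Matrix.mul_apply, Matrix.transpose_apply]
  calc ∑ r, (∑ s, Q r s * d s) ^ 2
      = ∑ r, ∑ s, ∑ s', (Q r s * d s) * (Q r s' * d s') := by
        simp [sq, Finset.sum_mul_sum]
    _ = ∑ s, ∑ s', (∑ r, Q r s * Q r s') * (d s * d s') := by
        rw [Finset.sum_comm]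
        refine Finset.sum_congr rfl fun s _ => ?_
        rw [Finset.sum_comm]
        refine Finset.sum_congr rfl fun s' _ => ?_
        rw [Finset.sum_mul]
        exact Finset.sum_congr rfl fun r _ => by ring
    _ = ∑ s, (d s) ^ 2 := by
        simp only [h', Matrix.one_apply, ite_mul, one_mul, zero_mul]
        simp [sq]

/-- Compatibility of `rigid` with conjugation by rigid motions. -/
lemma rigid_conj {c : ℕ} (Q₁ Q₂ B : Matrix (Fin 3) (Fin 3) ℝ)
    (hQ₂ : Q₂ᵀ * Q₂ = 1) (t₁ t₂ u : Fin 3 → ℝ) (X : Matrix (Fin 3) (Fin c) ℝ) :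
    rigid (Q₁ * B * Q₂ᵀ) (Q₁.mulVec u + t₁ - (Q₁ * B * Q₂ᵀ).mulVec t₂) (rigid Q₂ t₂ X)
      = rigid Q₁ t₁ (rigid B u X) := by
  have hA : (Q₁ * B * Q₂ᵀ) * Q₂ = Q₁ * B := by
    rw [Matrix.mul_assoc (Q₁ * B), hQ₂, Matrix.mul_one]
  have hA' : ∀ r m, ∑ s, (Q₁ * B * Q₂ᵀ) r s * Q₂ s m = (Q₁ * B) r m := by
    intro r m
    conv_rhs => rw [← hA]
    rw [Matrix.mul_apply]
  ext r p
  simp only [rigid, Matrix.of_apply, Matrix.mulVec, dotProduct,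
    Pi.add_apply, Pi.sub_apply]
  have key : ∑ s, (Q₁ * B * Q₂ᵀ) r s * ((∑ m, Q₂ s m * X m p) + t₂ s)
      = (∑ m, (Q₁ * B) r m * X m p) + ∑ s, (Q₁ * B * Q₂ᵀ) r s * t₂ s := by
    simp only [mul_add, Finset.sum_add_distrib]
    congr 1
    calc ∑ s, (Q₁ * B * Q₂ᵀ) r s * ∑ m, Q₂ s m * X m p
        = ∑ s, ∑ m, (Q₁ * B * Q₂ᵀ) r s * Q₂ s m * X m p := by
          refine Finset.sum_congr rfl fun s _ => ?_
          rw [Finset.mul_sum]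
          exact Finset.sum_congr rfl fun m _ => by ring
      _ = ∑ m, (∑ s, (Q₁ * B * Q₂ᵀ) r s * Q₂ s m) * X m p := by
          rw [Finset.sum_comm]
          exact Finset.sum_congr rfl fun m _ => (Finset.sum_mul ..).symm
      _ = ∑ m, (Q₁ * B) r m * X m p := by
          exact Finset.sum_congr rfl fun m _ => by rw [hA']
  rw [key]
  have rhs : ∑ s, Q₁ r s * ((∑ m, B s m * X m p) + u s)
      = (∑ m, (Q₁ * B) r m * X m p) + ∑ s, Q₁ r s * u s := by
    simp only [mul_add, Finset.sum_add_distrib]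
    congr 1
    calc ∑ s, Q₁ r s * ∑ m, B s m * X m p
        = ∑ s, ∑ m, Q₁ r s * B s m * X m p := by
          refine Finset.sum_congr rfl fun s _ => ?_
          rw [Finset.mul_sum]
          exact Finset.sum_congr rfl fun m _ => by ring
      _ = ∑ m, (∑ s, Q₁ r s * B s m) * X m p := by
          rw [Finset.sum_comm]
          exact Finset.sum_congr rfl fun m _ => (Finset.sum_mul ..).symm
      _ = ∑ m, (Q₁ * B) r m * X m p :=
          Finset.sum_congr rfl fun m _ => by rw [Matrix.mul_apply]
  rw [rhs]
  ring

/-- The loss is invariant under simultaneous rigid transformation. -/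
lemma alignLoss_conj {ι : Type*} [Fintype ι] {k : ι → ℕ}
    (P S : (i : ι) → Matrix (Fin 3) (Fin (k i)) ℝ)
    (Q₁ Q₂ B : Matrix (Fin 3) (Fin 3) ℝ)
    (hQ₁ : Q₁ᵀ * Q₁ = 1) (hQ₂ : Q₂ᵀ * Q₂ = 1)
    (t₁ t₂ u : Fin 3 → ℝ) :
    alignLoss (fun i => rigid Q₂ t₂ (P i)) (fun i => rigid Q₁ t₁ (S i))
        (Q₁ * B * Q₂ᵀ) (Q₁.mulVec u + t₁ - (Q₁ * B * Q₂ᵀ).mulVec t₂)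
      = alignLoss P S B u := by
  unfold alignLoss
  refine Finset.sum_congr rfl fun i _ => ?_
  rw [rigid_conj Q₁ Q₂ B hQ₂ t₁ t₂ u (P i)]
  calc ∑ r : Fin 3, ∑ p : Fin (k i),
        (rigid Q₁ t₁ (rigid B u (P i)) r p - rigid Q₁ t₁ (S i) r p) ^ 2
      = ∑ p : Fin (k i), ∑ r : Fin 3,
          (∑ s, Q₁ r s * (rigid B u (P i) s p - S i s p)) ^ 2 := by
        rw [Finset.sum_comm]
        refine Finset.sum_congr rfl fun p _ => Finset.sum_congr rfl fun r _ => ?_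
        congr 1
        simp only [rigid, Matrix.of_apply, Finset.mul_sum]
        rw [eq_comm, Finset.sum_congr rfl fun s _ => (by ring :
          Q₁ r s * (((∑ m, B s m * P i m p) + u s) - S i s p)
            = Q₁ r s * ((∑ m, B s m * P i m p) + u s) - Q₁ r s * S i s p),
          Finset.sum_sub_distrib]
        ring
    _ = ∑ p : Fin (k i), ∑ s : Fin 3, (rigid B u (P i) s p - S i s p) ^ 2 :=
        Finset.sum_congr rfl fun p _ => sum_sq_orth hQ₁ _
    _ = ∑ r : Fin 3, ∑ p : Fin (k i), (rigid B u (P i) r p - S i r p) ^ 2 :=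
        Finset.sum_comm ..

lemma orth_conj {Q₁ Q₂ B : Matrix (Fin 3) (Fin 3) ℝ}
    (hQ₁ : Q₁ᵀ * Q₁ = 1) (hQ₂ : Q₂ᵀ * Q₂ = 1) (hB : Bᵀ * B = 1) :
    (Q₁ * B * Q₂ᵀ)ᵀ * (Q₁ * B * Q₂ᵀ) = 1 := by
  have h2 : Q₂ * Q₂ᵀ = 1 := mul_eq_one_comm.mp hQ₂
  simp only [Matrix.transpose_mul, Matrix.transpose_transpose, Matrix.mul_assoc]
  rw [← Matrix.mul_assoc Q₁ᵀ Q₁, hQ₁, Matrix.one_mul,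
    ← Matrix.mul_assoc Bᵀ B, hB, Matrix.one_mul, h2]

/-- `(Q, t)` is a global minimizer of `L_{P,S}` over `O(3) × ℝ³` iff
`(Q₁ Q Q₂ᵀ, Q₁ t + t₁ − Q₁ Q Q₂ᵀ t₂)` is a global minimizer of `L_{P',S'}`, where
`P'_i = Q₂ P_i + t₂ 1ᵀ` and `S'_i = Q₁ S_i + t₁ 1ᵀ`. -/
theorem isKabschMin_rigid_iff {ι : Type*} [Fintype ι] {k : ι → ℕ}
    (P S : (i : ι) → Matrix (Fin 3) (Fin (k i)) ℝ)
    (Q₁ Q₂ : Matrix (Fin 3) (Fin 3) ℝ)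
    (hQ₁ : Q₁ᵀ * Q₁ = 1) (hQ₂ : Q₂ᵀ * Q₂ = 1)
    (t₁ t₂ : Fin 3 → ℝ)
    (Q : Matrix (Fin 3) (Fin 3) ℝ) (t : Fin 3 → ℝ) :
    IsKabschMin P S Q t ↔
      IsKabschMin (fun i => rigid Q₂ t₂ (P i)) (fun i => rigid Q₁ t₁ (S i))
        (Q₁ * Q * Q₂ᵀ) (Q₁.mulVec t + t₁ - (Q₁ * Q * Q₂ᵀ).mulVec t₂) := by
  have h1 : Q₁ * Q₁ᵀ = 1 := mul_eq_one_comm.mp hQ₁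
  have h2 : Q₂ * Q₂ᵀ = 1 := mul_eq_one_comm.mp hQ₂
  constructor
  · rintro ⟨hQ, hmin⟩
    refine ⟨orth_conj hQ₁ hQ₂ hQ, fun Q' t' hQ' => ?_⟩
    set B := Q₁ᵀ * Q' * Q₂ with hBdef
    set u := Q₁ᵀ.mulVec (t' - t₁ + Q'.mulVec t₂) with hudef
    have hB : Q₁ * B * Q₂ᵀ = Q' := by
      rw [hBdef]
      calc Q₁ * (Q₁ᵀ * Q' * Q₂) * Q₂ᵀ = (Q₁ * Q₁ᵀ) * Q' * (Q₂ * Q₂ᵀ) := by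
            simp only [Matrix.mul_assoc]
        _ = Q' := by rw [h1, h2, Matrix.one_mul, Matrix.mul_one]
    have hu : Q₁.mulVec u + t₁ - (Q₁ * B * Q₂ᵀ).mulVec t₂ = t' := by
      rw [hB, hudef, Matrix.mulVec_mulVec, h1, Matrix.one_mulVec]
      ext r; simp; ring
    have hBorth : Bᵀ * B = 1 := by
      rw [hBdef]
      simp only [Matrix.transpose_mul, Matrix.transpose_transpose, Matrix.mul_assoc]
      rw [← Matrix.mul_assoc Q₁ Q₁ᵀ, h1, Matrix.one_mul,
        ← Matrix.mul_assoc Q'ᵀ Q', hQ', Matrix.one_mul, hQ₂]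
    calc alignLoss (fun i => rigid Q₂ t₂ (P i)) (fun i => rigid Q₁ t₁ (S i))
          (Q₁ * Q * Q₂ᵀ) (Q₁.mulVec t + t₁ - (Q₁ * Q * Q₂ᵀ).mulVec t₂)
        = alignLoss P S Q t := alignLoss_conj P S Q₁ Q₂ Q hQ₁ hQ₂ t₁ t₂ t
      _ ≤ alignLoss P S B u := hmin B u hBorth
      _ = alignLoss (fun i => rigid Q₂ t₂ (P i)) (fun i => rigid Q₁ t₁ (S i)) Q' t' := by
          rw [← hB, ← hu, alignLoss_conj P S Q₁ Q₂ B hQ₁ hQ₂ t₁ t₂ u]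
  · rintro ⟨hA, hmin⟩
    have hQ : Qᵀ * Q = 1 := by
      have hQeq : Q = Q₁ᵀ * (Q₁ * Q * Q₂ᵀ) * Q₂ᵀᵀ := by
        rw [Matrix.transpose_transpose]
        calc Q = (Q₁ᵀ * Q₁) * Q * (Q₂ᵀ * Q₂) := by
              rw [hQ₁, hQ₂, Matrix.one_mul, Matrix.mul_one]
          _ = Q₁ᵀ * (Q₁ * Q * Q₂ᵀ) * Q₂ := by simp only [Matrix.mul_assoc]
      rw [hQeq]
      exact orth_conj (by rw [Matrix.transpose_transpose]; exact h1)
        (by rw [Matrix.transpose_transpose]; exact h2) hA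
    refine ⟨hQ, fun Q' t' hQ' => ?_⟩
    have hQ'conj : (Q₁ * Q' * Q₂ᵀ)ᵀ * (Q₁ * Q' * Q₂ᵀ) = 1 := orth_conj hQ₁ hQ₂ hQ'
    calc alignLoss P S Q t
        = alignLoss (fun i => rigid Q₂ t₂ (P i)) (fun i => rigid Q₁ t₁ (S i))
            (Q₁ * Q * Q₂ᵀ) (Q₁.mulVec t + t₁ - (Q₁ * Q * Q₂ᵀ).mulVec t₂) :=
          (alignLoss_conj P S Q₁ Q₂ Q hQ₁ hQ₂ t₁ t₂ t).symm
      _ ≤ alignLoss (fun i => rigid Q₂ t₂ (P i)) (fun i => rigid Q₁ t₁ (S i))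
            (Q₁ * Q' * Q₂ᵀ) (Q₁.mulVec t' + t₁ - (Q₁ * Q' * Q₂ᵀ).mulVec t₂) :=
          hmin _ _ hQ'conj
      _ = alignLoss P S Q' t' := alignLoss_conj P S Q₁ Q₂ Q' hQ₁ hQ₂ t₁ t₂ t'

end
end
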